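/- Let Ω and Δ be locally compact Hausdorff spaces, at least one of which has no isolated points, and let θ : C₀(Ω) → C₀(Δ) be a bijective ℂ-linear map such that both θ and θ⁻¹ are disjointness preserving. Then θ is bounded. -/

import Mathlib

open ZeroAtInfty Topology Filter Set

set_option linter.unusedSectionVars false
noncomputable section

variable {X : Type*} [TopologicalSpace X] [LocallyCompactSpace X] [T2Space X]

/-- Build a `C₀` function from a compactly supported continuous function. -/
def ofCS (f : C(X, ℂ)) (h : HasCompactSupport ⇑f) : C₀(X, ℂ) :=
  ⟨f, by
    refine Filter.Tendsto.congr' ?_ tendsto_const_nhds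
    filter_upwards [Filter.mem_cocompact.mpr ⟨tsupport ⇑f, h, Set.compl_subset_compl.mpr
      (subset_tsupport ⇑f)⟩] with x hx
    have : f x = 0 := by simpa using hx
    simp [this]⟩

@[simp] lemma ofCS_apply (f : C(X, ℂ)) (h : HasCompactSupport ⇑f) (x : X) :
    ofCS f h x = f x := rfl

/-- Multiply a `C₀` function by a bounded real continuous cutoff. -/
def cmul (χ : X → ℝ) (hχ : Continuous χ) (hb : ∀ x, |χ x| ≤ 1) (f : C₀(X, ℂ)) : C₀(X, ℂ) :=
  ⟨⟨fun x => (χ x : ℂ) * f x, by fun_prop⟩, by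
    refine squeeze_zero_norm (fun x => ?_) (by simpa using (zero_at_infty f).norm)
    have : ‖(χ x : ℂ) * f x‖ = |χ x| * ‖f x‖ := by
      rw [norm_mul, Complex.norm_real, Real.norm_eq_abs]
    rw [this]
    exact mul_le_of_le_one_left (norm_nonneg _) (hb x)⟩

@[simp] lemma cmul_apply (χ : X → ℝ) (hχ : Continuous χ) (hb : ∀ x, |χ x| ≤ 1) (f : C₀(X, ℂ))
    (x : X) : cmul χ hχ hb f x = (χ x : ℂ) * f x := rfl

/-- A real Urysohn bump: 1 on a neighborhood of the compact set `K`, compactly supported in the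
open set `U`. -/
lemma exists_bump {K U : Set X} (hK : IsCompact K) (hU : IsOpen U) (hKU : K ⊆ U) :
    ∃ χ : C(X, ℝ), (∃ V, IsOpen V ∧ K ⊆ V ∧ EqOn χ 1 V) ∧ tsupport ⇑χ ⊆ U ∧
      HasCompactSupport ⇑χ ∧ ∀ x, χ x ∈ Icc (0:ℝ) 1 := by
  obtain ⟨L, hL, hKL, hLU⟩ := exists_compact_between hK hU hKU
  obtain ⟨M, hM, hLM, hMU⟩ := exists_compact_between hL hU hLU
  obtain ⟨χ, hχ1, hχ0, hcs, hmem⟩ := exists_continuous_one_zero_of_isCompact hL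
    (isOpen_interior (s := M)).isClosed_compl
    (by rw [Set.disjoint_compl_right_iff_subset]; exact hLM)
  refine ⟨χ, ⟨interior L, isOpen_interior, hKL, fun x hx => hχ1 (interior_subset hx)⟩, ?_, hcs,
    hmem⟩
  have h1 : tsupport ⇑χ ⊆ closure (interior M) := by
    apply closure_mono
    intro x hx
    by_contra hxM
    exact hx (hχ0 hxM)
  refine h1.trans ?_
  calc closure (interior M) ⊆ closure M := closure_mono interior_subset
  _ = M := hM.isClosed.closure_eq
  _ ⊆ U := hMU

/-- A `C₀` complex bump at a point. -/
lemma exists_c0_bump {x : X} {U : Set X} (hU : IsOpen U) (hx : x ∈ U) :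
    ∃ e : C₀(X, ℂ), e x = 1 ∧ tsupport ⇑e ⊆ U ∧ HasCompactSupport ⇑e ∧ (∀ z, ‖e z‖ ≤ 1) ∧
      ∃ V, IsOpen V ∧ x ∈ V ∧ ∀ z ∈ V, e z = 1 := by
  obtain ⟨χ, ⟨V, hVo, hxV, hχ1⟩, hsupp, hcs, hmem⟩ :=
    exists_bump (isCompact_singleton : IsCompact {x}) hU (Set.singleton_subset_iff.mpr hx)
  have hcont : Continuous (fun z => (χ z : ℂ)) := by fun_prop
  have hsub : Function.support (fun z => (χ z : ℂ)) ⊆ Function.support ⇑χ := by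
    intro z hz
    simp only [Function.mem_support] at hz ⊢
    exact_mod_cast hz
  have hcs' : HasCompactSupport (fun z => (χ z : ℂ)) :=
    IsCompact.of_isClosed_subset hcs isClosed_closure (closure_mono hsub)
  refine ⟨ofCS ⟨fun z => (χ z : ℂ), hcont⟩ hcs', by simp [hχ1 (hxV rfl)], ?_, hcs', ?_, V, hVo,
    hxV rfl, fun z hz => by simp [hχ1 hz]⟩
  · exact (closure_mono hsub).trans hsupp
  · intro z
    simp only [ofCS_apply, ContinuousMap.coe_mk, Complex.norm_real, Real.norm_eq_abs]
    exact abs_le.mpr ⟨by linarith [(hmem z).1], (hmem z).2⟩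

lemma c0_norm_apply_le (f : C₀(X, ℂ)) (x : X) : ‖f x‖ ≤ ‖f‖ := by
  rw [← ZeroAtInftyContinuousMap.norm_toBCF_eq_norm]
  exact BoundedContinuousFunction.norm_coe_le_norm f.toBCF x

lemma c0_norm_le (f : C₀(X, ℂ)) {C : ℝ} (hC : 0 ≤ C) (h : ∀ x, ‖f x‖ ≤ C) : ‖f‖ ≤ C := by
  rw [← ZeroAtInftyContinuousMap.norm_toBCF_eq_norm]
  exact BoundedContinuousFunction.norm_le hC |>.mpr h

/-- Evaluation at a point, as a continuous linear map. -/
def evCLM (x : X) : C₀(X, ℂ) →L[ℂ] ℂ :=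
  LinearMap.mkContinuous
    { toFun := fun f => f x
      map_add' := fun f g => rfl
      map_smul' := fun c f => rfl } 1 (fun f => by simpa using c0_norm_apply_le f x)

@[simp] lemma evCLM_apply (x : X) (f : C₀(X, ℂ)) : evCLM x f = f x := rfl

/-- The norm of a `C₀` function is small if small outside a compact set. -/
lemma exists_compact_norm_lt (f : C₀(X, ℂ)) {ε : ℝ} (hε : 0 < ε) :
    ∃ K : Set X, IsCompact K ∧ ∀ z ∉ K, ‖f z‖ < ε := by
  have h : ∀ᶠ z in Filter.cocompact X, ‖f z‖ < ε := by
    have hn : Filter.Tendsto (fun z => ‖f z‖) (Filter.cocompact X) (𝓝 0) := by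
      simpa using (zero_at_infty f).norm
    exact hn.eventually (eventually_lt_nhds hε)
  obtain ⟨K, hKc, hK⟩ := Filter.mem_cocompact.mp h
  exact ⟨K, hKc, fun z hz => hK hz⟩
section FunctionalSupport

variable {X : Type*} [TopologicalSpace X] [LocallyCompactSpace X] [T2Space X]

/-- Disjointness preserving functional. -/
def SepF (T : C₀(X, ℂ) →ₗ[ℂ] ℂ) : Prop :=
  ∀ f g : C₀(X, ℂ), (∀ x, f x * g x = 0) → T f * T g = 0

/-- `T` kills functions supported in `U`. -/
def DeadOn (T : C₀(X, ℂ) →ₗ[ℂ] ℂ) (U : Set X) : Prop :=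
  ∀ f : C₀(X, ℂ), tsupport ⇑f ⊆ U → T f = 0

/-- `T` kills functions vanishing in a neighborhood of `x`. -/
def KillsNear (T : C₀(X, ℂ) →ₗ[ℂ] ℂ) (x : X) : Prop :=
  ∀ f : C₀(X, ℂ), (∃ N, IsOpen N ∧ x ∈ N ∧ ∀ y ∈ N, f y = 0) → T f = 0

/-- `T` kills compactly supported functions. -/
def KillsCpt (T : C₀(X, ℂ) →ₗ[ℂ] ℂ) : Prop :=
  ∀ f : C₀(X, ℂ), HasCompactSupport ⇑f → T f = 0

lemma foldr_open (L : List (Set X)) (h : ∀ U ∈ L, IsOpen U) :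
    IsOpen (L.foldr (· ∪ ·) ∅) := by
  induction L with
  | nil => exact isOpen_empty
  | cons U L ih =>
    exact IsOpen.union (h U (by simp)) (ih fun V hV => h V (by simp [hV]))

lemma split (T : C₀(X, ℂ) →ₗ[ℂ] ℂ) (L : List (Set X)) (hLo : ∀ U ∈ L, IsOpen U)
    (hLd : ∀ U ∈ L, DeadOn T U) (K : Set X) (hK : IsCompact K)
    (hcov : K ⊆ L.foldr (· ∪ ·) ∅) (f : C₀(X, ℂ)) :
    ∃ g : C₀(X, ℂ), T f = T g ∧ (∀ x, g x ≠ 0 → f x ≠ 0) ∧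
      ∃ W, IsOpen W ∧ K ⊆ W ∧ ∀ x ∈ W, g x = 0 := by
  induction L generalizing K f with
  | nil =>
    refine ⟨f, rfl, fun x h => h, ∅, isOpen_empty, by simpa using hcov, by simp⟩
  | cons U L ih =>
    have hUo : IsOpen U := hLo U (by simp)
    have hRo : IsOpen (L.foldr (· ∪ ·) ∅) := foldr_open L fun V hV => hLo V (by simp [hV])
    obtain ⟨K₁, K₂, hK₁c, hK₂c, hK₁U, hK₂R, hK12⟩ :=
      hK.binary_compact_cover hUo hRo (by simpa using hcov)
    obtain ⟨χ, ⟨V, hVo, hK₁V, hχ1⟩, hsupp, hcs, hmem⟩ := exists_bump hK₁c hUo hK₁U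
    have habs : ∀ x, |χ x| ≤ 1 := fun x => abs_le.mpr ⟨by linarith [(hmem x).1], (hmem x).2⟩
    have habs' : ∀ x, |1 - χ x| ≤ 1 := fun x =>
      abs_le.mpr ⟨by linarith [(hmem x).2], by linarith [(hmem x).1]⟩
    set f₁ := cmul (⇑χ) χ.continuous habs f with hf₁
    set f' := cmul (fun x => 1 - χ x) (by fun_prop) habs' f with hf'
    have hsum : f = f₁ + f' := by
      ext x
      simp only [hf₁, hf', ZeroAtInftyContinuousMap.add_apply, cmul_apply]
      push_cast
      ring
    have hTf₁ : T f₁ = 0 := by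
      refine hLd U (by simp) f₁ (subset_trans (closure_mono ?_) hsupp)
      intro x hx
      simp only [hf₁, cmul_apply, Function.mem_support] at hx ⊢
      intro h0
      simp [h0] at hx
    have hTf : T f = T f' := by
      rw [hsum, map_add, hTf₁, zero_add]
    obtain ⟨g, hTg, hcoz, W₂, hW₂o, hK₂W, hgW⟩ :=
      ih (fun V hV => hLo V (by simp [hV])) (fun V hV => hLd V (by simp [hV])) K₂ hK₂c hK₂R f'
    refine ⟨g, hTf.trans hTg, ?_, V ∪ W₂, hVo.union hW₂o, ?_, ?_⟩
    · intro x hx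
      have := hcoz x hx
      simp only [hf', cmul_apply] at this
      intro h0
      simp [h0] at this
    · rw [hK12]
      exact Set.union_subset_union hK₁V hK₂W
    · rintro x (hx | hx)
      · by_contra hgx
        have := hcoz x hgx
        simp only [hf', cmul_apply, hχ1 hx] at this
        simp at this
      · exact hgW x hx
lemma mem_foldr {X : Type*} (L : List (Set X)) (x : X) :
    x ∈ L.foldr (· ∪ ·) ∅ ↔ ∃ U ∈ L, x ∈ U := by
  induction L with
  | nil => simp
  | cons U L ih => simp [ih]

variable {X : Type*} [TopologicalSpace X] [LocallyCompactSpace X] [T2Space X]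

lemma killsnear_unique {T : C₀(X, ℂ) →ₗ[ℂ] ℂ} {x y : X} (hx : KillsNear T x)
    (hy : KillsNear T y) (hT : T ≠ 0) : x = y := by
  by_contra hxy
  apply hT
  ext f
  obtain ⟨Vx, Vy, hVxo, hVyo, hxVx, hyVy, hd⟩ := t2_separation hxy
  obtain ⟨χ, ⟨V, hVo, hxV, hχ1⟩, hsupp, hcs, hmem⟩ :=
    exists_bump isCompact_singleton hVxo (Set.singleton_subset_iff.mpr hxVx)
  have habs : ∀ z, |χ z| ≤ 1 := fun z => abs_le.mpr ⟨by linarith [(hmem z).1], (hmem z).2⟩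
  have habs' : ∀ z, |1 - χ z| ≤ 1 := fun z =>
    abs_le.mpr ⟨by linarith [(hmem z).2], by linarith [(hmem z).1]⟩
  have h1 : T (cmul (⇑χ) χ.continuous habs f) = 0 := by
    refine hy _ ⟨Vy, hVyo, hyVy, fun z hz => ?_⟩
    have : χ z = 0 := by
      apply image_eq_zero_of_notMem_tsupport
      intro hzs
      exact Set.disjoint_left.mp hd (hsupp hzs) hz
    simp [this]
  have h2 : T (cmul (fun z => 1 - χ z) (by fun_prop) habs' f) = 0 := by
    refine hx _ ⟨V, hVo, hxV rfl, fun z hz => ?_⟩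
    simp [hχ1 hz]
  have hsum : f = cmul (⇑χ) χ.continuous habs f + cmul (fun z => 1 - χ z) (by fun_prop) habs' f := by
    ext z
    simp only [ZeroAtInftyContinuousMap.add_apply, cmul_apply]
    push_cast
    ring
  simp only [LinearMap.zero_apply]
  rw [hsum, map_add, h1, h2, add_zero]

lemma killsnear_killscpt {T : C₀(X, ℂ) →ₗ[ℂ] ℂ} {x : X} (hx : KillsNear T x)
    (hc : KillsCpt T) : T = 0 := by
  ext f
  obtain ⟨χ, ⟨V, hVo, hxV, hχ1⟩, hsupp, hcs, hmem⟩ :=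
    exists_bump (isCompact_singleton : IsCompact {x}) isOpen_univ (Set.subset_univ _)
  have habs : ∀ z, |χ z| ≤ 1 := fun z => abs_le.mpr ⟨by linarith [(hmem z).1], (hmem z).2⟩
  have habs' : ∀ z, |1 - χ z| ≤ 1 := fun z =>
    abs_le.mpr ⟨by linarith [(hmem z).2], by linarith [(hmem z).1]⟩
  have h1 : T (cmul (⇑χ) χ.continuous habs f) = 0 := by
    refine hc _ ?_
    refine IsCompact.of_isClosed_subset hcs isClosed_closure (closure_mono ?_)
    intro z hz
    simp only [Function.mem_support, cmul_apply] at hz ⊢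
    intro h0
    simp [h0] at hz
  have h2 : T (cmul (fun z => 1 - χ z) (by fun_prop) habs' f) = 0 := by
    refine hx _ ⟨V, hVo, hxV rfl, fun z hz => ?_⟩
    simp [hχ1 hz]
  have hsum : f = cmul (⇑χ) χ.continuous habs f + cmul (fun z => 1 - χ z) (by fun_prop) habs' f := by
    ext z
    simp only [ZeroAtInftyContinuousMap.add_apply, cmul_apply]
    push_cast
    ring
  simp only [LinearMap.zero_apply]
  rw [hsum, map_add, h1, h2, add_zero]

lemma support_dichotomy {T : C₀(X, ℂ) →ₗ[ℂ] ℂ} (hs : SepF T) (hT : T ≠ 0) :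
    (∃ x, KillsNear T x) ∨ KillsCpt T := by
  classical
  by_cases hnd : ∃ x₀ : X, ¬ ∃ U, IsOpen U ∧ x₀ ∈ U ∧ DeadOn T U
  · obtain ⟨x₀, hx₀⟩ := hnd
    push_neg at hx₀
    -- x₀ is "non-dead": every open neighborhood supports a function not killed by `T`
    have hx₀w : ∀ U, IsOpen U → x₀ ∈ U → ∃ f : C₀(X, ℂ), tsupport ⇑f ⊆ U ∧ T f ≠ 0 := by
      intro U hUo hxU
      have := hx₀ U hUo hxU
      unfold DeadOn at this
      push_neg at this
      exact this
    -- every other point is dead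
    have hdead : ∀ y : X, y ≠ x₀ → ∃ U, IsOpen U ∧ y ∈ U ∧ DeadOn T U := by
      intro y hy
      by_contra hc
      push_neg at hc
      have hyw : ∀ U, IsOpen U → y ∈ U → ∃ f : C₀(X, ℂ), tsupport ⇑f ⊆ U ∧ T f ≠ 0 := by
        intro U hUo hyU
        have := hc U hUo hyU
        unfold DeadOn at this
        push_neg at this
        exact this
      obtain ⟨Vx, Vy, hVxo, hVyo, hxVx, hyVy, hd⟩ := t2_separation (Ne.symm hy)
      obtain ⟨f, hfs, hfT⟩ := hx₀w Vx hVxo hxVx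
      obtain ⟨g, hgs, hgT⟩ := hyw Vy hVyo hyVy
      have := hs f g ?_
      · exact (mul_ne_zero hfT hgT) this
      · intro z
        rcases eq_or_ne (f z) 0 with h | h
        · simp [h]
        · have hz : z ∈ Vx := hfs (subset_tsupport _ (by simpa using h))
          have : g z = 0 := by
            apply image_eq_zero_of_notMem_tsupport
            intro hzs
            exact Set.disjoint_left.mp hd hz (hgs hzs)
          simp [this]
    -- deadness at infinity
    have hinf : ∃ K, IsCompact K ∧ ∀ f : C₀(X, ℂ), Disjoint (tsupport ⇑f) K → T f = 0 := by
      by_contra hc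
      push_neg at hc
      obtain ⟨N, hNc, hNx⟩ := exists_compact_mem_nhds x₀
      obtain ⟨f, hfs, hfT⟩ := hx₀w (interior N) isOpen_interior (mem_interior_iff_mem_nhds.mpr hNx)
      obtain ⟨g, hgd, hgT⟩ := hc N hNc
      have := hs f g ?_
      · exact (mul_ne_zero hfT hgT) this
      · intro z
        rcases eq_or_ne (f z) 0 with h | h
        · simp [h]
        · have hz : z ∈ N := interior_subset (hfs (subset_tsupport _ (by simpa using h)))
          have : g z = 0 := by
            apply image_eq_zero_of_notMem_tsupport
            intro hzs
            exact Set.disjoint_left.mp hgd hzs hz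
          simp [this]
    obtain ⟨K, hKc, hKd⟩ := hinf
    left
    refine ⟨x₀, ?_⟩
    rintro f ⟨O, hOo, hxO, hfO⟩
    -- cover `K \ O` by dead opens
    have hK'c : IsCompact (K ∩ Oᶜ) := hKc.inter_right hOo.isClosed_compl
    set ι := {y : X // y ≠ x₀}
    have hUc : ∀ i : ι, ∃ U, IsOpen U ∧ i.1 ∈ U ∧ DeadOn T U := fun i => hdead i.1 i.2
    choose Ud hUo hUm hUd using hUc
    have hcov : K ∩ Oᶜ ⊆ ⋃ i : ι, Ud i := by
      intro y hy
      have hyne : y ≠ x₀ := by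
        rintro rfl
        exact hy.2 hxO
      exact Set.mem_iUnion.mpr ⟨⟨y, hyne⟩, hUm _⟩
    obtain ⟨t, ht⟩ := hK'c.elim_finite_subcover Ud hUo hcov
    set L : List (Set X) := t.toList.map Ud with hL
    have hmemL : ∀ U ∈ L, ∃ i ∈ t, Ud i = U := by
      intro U hU
      simp only [hL, List.mem_map, Finset.mem_toList] at hU
      obtain ⟨i, hi, rfl⟩ := hU
      exact ⟨i, hi, rfl⟩
    have hLo : ∀ U ∈ L, IsOpen U := by
      intro U hU; obtain ⟨i, _, rfl⟩ := hmemL U hU; exact hUo i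
    have hLd : ∀ U ∈ L, DeadOn T U := by
      intro U hU; obtain ⟨i, _, rfl⟩ := hmemL U hU; exact hUd i
    have hcov' : K ∩ Oᶜ ⊆ L.foldr (· ∪ ·) ∅ := by
      intro y hy
      obtain ⟨i, hit, hyi⟩ := Set.mem_iUnion₂.mp (ht hy)
      exact (mem_foldr L y).mpr ⟨Ud i, by
        simp only [hL, List.mem_map, Finset.mem_toList]; exact ⟨i, hit, rfl⟩, hyi⟩
    obtain ⟨g, hTg, hcoz, W, hWo, hKW, hgW⟩ := split T L hLo hLd _ hK'c hcov' f
    rw [hTg]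
    refine hKd g ?_
    rw [Set.disjoint_left]
    intro z hz hzK
    by_cases hzO : z ∈ O
    · have : tsupport ⇑g ⊆ Oᶜ := by
        rw [← hOo.isClosed_compl.closure_eq]
        apply closure_mono
        intro w hw
        simp only [Function.mem_support] at hw
        intro hwO
        exact (hcoz w hw) (hfO w hwO)
      exact this hz hzO
    · have hzW : z ∈ W := hKW ⟨hzK, hzO⟩
      obtain ⟨w, hwW, hw⟩ := mem_closure_iff.mp hz W hWo hzW
      exact hw (hgW w hwW)
  · -- every point is dead: `T` kills compactly supported functions
    push_neg at hnd
    right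
    intro f hcs
    have hUc : ∀ y : X, ∃ U, IsOpen U ∧ y ∈ U ∧ DeadOn T U := hnd
    choose Ud hUo hUm hUd using hUc
    have hcov : tsupport ⇑f ⊆ ⋃ y : X, Ud y := fun y _ => Set.mem_iUnion.mpr ⟨y, hUm y⟩
    obtain ⟨t, ht⟩ := hcs.elim_finite_subcover Ud hUo hcov
    set L : List (Set X) := t.toList.map Ud with hL
    have hmemL : ∀ U ∈ L, ∃ i ∈ t, Ud i = U := by
      intro U hU
      simp only [hL, List.mem_map, Finset.mem_toList] at hU
      obtain ⟨i, hi, rfl⟩ := hU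
      exact ⟨i, hi, rfl⟩
    have hLo : ∀ U ∈ L, IsOpen U := by
      intro U hU; obtain ⟨i, _, rfl⟩ := hmemL U hU; exact hUo i
    have hLd : ∀ U ∈ L, DeadOn T U := by
      intro U hU; obtain ⟨i, _, rfl⟩ := hmemL U hU; exact hUd i
    have hcov' : tsupport ⇑f ⊆ L.foldr (· ∪ ·) ∅ := by
      intro y hy
      obtain ⟨i, hit, hyi⟩ := Set.mem_iUnion₂.mp (ht hy)
      exact (mem_foldr L y).mpr ⟨Ud i, by
        simp only [hL, List.mem_map, Finset.mem_toList]; exact ⟨i, hit, rfl⟩, hyi⟩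
    obtain ⟨g, hTg, hcoz, W, hWo, hKW, hgW⟩ := split T L hLo hLd _ hcs hcov' f
    have hg0 : g = 0 := by
      ext z
      by_cases hzW : z ∈ W
      · simp [hgW z hzW]
      · by_contra hgz
        have : f z ≠ 0 := hcoz z (by simpa using hgz)
        exact hzW (hKW (subset_tsupport _ (by simpa using this)))
    rw [hTg, hg0, map_zero]

end FunctionalSupport
section Theta

variable {X Y : Type*} [TopologicalSpace X] [LocallyCompactSpace X] [T2Space X]
  [TopologicalSpace Y] [LocallyCompactSpace Y] [T2Space Y]

/-- The functional `f ↦ θ f y`. -/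
def Fm (θ : C₀(X, ℂ) ≃ₗ[ℂ] C₀(Y, ℂ)) (y : Y) : C₀(X, ℂ) →ₗ[ℂ] ℂ where
  toFun f := θ f y
  map_add' f g := by simp
  map_smul' c f := by simp

@[simp] lemma Fm_apply (θ : C₀(X, ℂ) ≃ₗ[ℂ] C₀(Y, ℂ)) (y : Y) (f : C₀(X, ℂ)) :
    Fm θ y f = θ f y := rfl

/-- Pointwise-disjointness-preserving hypothesis. -/
def PDP (θ : C₀(X, ℂ) ≃ₗ[ℂ] C₀(Y, ℂ)) : Prop :=
  ∀ f g : C₀(X, ℂ), (∀ x, f x * g x = 0) → ∀ y, θ f y * θ g y = 0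

lemma sepFm {θ : C₀(X, ℂ) ≃ₗ[ℂ] C₀(Y, ℂ)} (hθ : PDP θ) (y : Y) : SepF (Fm θ y) :=
  fun f g h => hθ f g h y

lemma Fm_ne (θ : C₀(X, ℂ) ≃ₗ[ℂ] C₀(Y, ℂ)) (y : Y) : Fm θ y ≠ 0 := by
  obtain ⟨e, he1, -, -, -, -⟩ := exists_c0_bump (isOpen_univ : IsOpen (Set.univ : Set Y)) (Set.mem_univ y)
  intro h
  have : Fm θ y (θ.symm e) = 0 := by rw [h]; rfl
  rw [Fm_apply, θ.apply_symm_apply] at this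
  rw [he1] at this
  exact one_ne_zero this

/-- Boundedness of the functional `Fm θ y`. -/
def Bdd (θ : C₀(X, ℂ) ≃ₗ[ℂ] C₀(Y, ℂ)) (y : Y) : Prop :=
  ∃ C : ℝ, ∀ f : C₀(X, ℂ), ‖θ f y‖ ≤ C * ‖f‖

/-- A bounded `Fm θ y` is a weighted point evaluation. -/
lemma good_form {θ : C₀(X, ℂ) ≃ₗ[ℂ] C₀(Y, ℂ)} (hθ : PDP θ) {y : Y} (hb : Bdd θ y) :
    ∃ (x : X) (c : ℂ), c ≠ 0 ∧ KillsNear (Fm θ y) x ∧ ∀ f : C₀(X, ℂ), θ f y = c * f x := by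
  obtain ⟨C₁, hC₁⟩ := hb
  set C := max C₁ 0 with hCdef
  have hC : ∀ f : C₀(X, ℂ), ‖θ f y‖ ≤ C * ‖f‖ := fun f =>
    (hC₁ f).trans (mul_le_mul_of_nonneg_right (le_max_left _ _) (norm_nonneg _))
  have hC0 : 0 ≤ C := le_max_right _ _
  rcases support_dichotomy (sepFm hθ y) (Fm_ne θ y) with ⟨x, hx⟩ | hcpt
  · -- `Fm θ y` kills functions vanishing at `x`
    have hvan : ∀ f : C₀(X, ℂ), f x = 0 → θ f y = 0 := by
      intro f hfx
      have key : ∀ ε : ℝ, 0 < ε → ‖θ f y‖ ≤ C * ε := by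
        intro ε hε
        have hNopen : IsOpen {z | ‖f z‖ < ε} := by
          have : Continuous fun z => ‖f z‖ := f.continuous.norm
          exact isOpen_lt this continuous_const
        have hxN : x ∈ {z | ‖f z‖ < ε} := by simp [hfx, hε]
        obtain ⟨χ, ⟨V, hVo, hxV, hχ1⟩, hsupp, hcs, hmem⟩ :=
          exists_bump (isCompact_singleton : IsCompact {x}) hNopen
            (Set.singleton_subset_iff.mpr hxN)
        have habs : ∀ z, |χ z| ≤ 1 := fun z => abs_le.mpr ⟨by linarith [(hmem z).1], (hmem z).2⟩
        have habs' : ∀ z, |1 - χ z| ≤ 1 := fun z =>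
          abs_le.mpr ⟨by linarith [(hmem z).2], by linarith [(hmem z).1]⟩
        have hsum : f = cmul (⇑χ) χ.continuous habs f +
            cmul (fun z => 1 - χ z) (by fun_prop) habs' f := by
          ext z
          simp only [ZeroAtInftyContinuousMap.add_apply, cmul_apply]
          push_cast
          ring
        have h2 : Fm θ y (cmul (fun z => 1 - χ z) (by fun_prop) habs' f) = 0 :=
          hx _ ⟨V, hVo, hxV rfl, fun z hz => by simp [hχ1 hz]⟩
        have h1 : ‖cmul (⇑χ) χ.continuous habs f‖ ≤ ε := by
          refine c0_norm_le _ hε.le fun z => ?_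
          rcases eq_or_ne (χ z) 0 with h | h
          · simp only [cmul_apply, h, Complex.ofReal_zero, zero_mul, norm_zero]
            exact hε.le
          · have hz : z ∈ {z | ‖f z‖ < ε} := hsupp (subset_tsupport _ (by simpa using h))
            simp only [cmul_apply, norm_mul, Complex.norm_real, Real.norm_eq_abs]
            calc |χ z| * ‖f z‖ ≤ 1 * ε := by
                  apply mul_le_mul (habs z) hz.out.le (norm_nonneg _) zero_le_one
            _ = ε := one_mul ε
        have : θ f y = Fm θ y (cmul (⇑χ) χ.continuous habs f) := by
          conv_lhs => rw [hsum]
          simp only [Fm_apply] at h2 ⊢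
          rw [map_add]
          simp only [ZeroAtInftyContinuousMap.add_apply]
          rw [show (θ (cmul (fun z => 1 - χ z) (by fun_prop) habs' f)) y = 0 from h2]
          simp
        rw [this]
        calc ‖Fm θ y (cmul (⇑χ) χ.continuous habs f)‖ ≤ C * ‖cmul (⇑χ) χ.continuous habs f‖ :=
              hC _
        _ ≤ C * ε := by nlinarith
      by_contra h0
      have hlt : 0 < ‖θ f y‖ := norm_pos_iff.mpr h0
      have hkey := key (‖θ f y‖ / (C + 1)) (by positivity)
      rw [← mul_div_assoc] at hkey
      have hlt2 : C * ‖θ f y‖ / (C + 1) < ‖θ f y‖ := by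
        rw [div_lt_iff₀ (by positivity)]
        nlinarith
      linarith
    obtain ⟨e, he1, hes, hecs, heb, V₀, hV₀o, hxV₀, heV₀⟩ :=
      exists_c0_bump (isOpen_univ : IsOpen (Set.univ : Set X)) (Set.mem_univ x)
    have hc : ∀ f : C₀(X, ℂ), θ f y = (θ e y) * f x := by
      intro f
      have : (f - f x • e) x = 0 := by
        simp [he1]
      have h0 := hvan _ this
      simp only [map_sub, map_smul, ZeroAtInftyContinuousMap.sub_apply,
        ZeroAtInftyContinuousMap.smul_apply, smul_eq_mul] at h0
      rw [sub_eq_zero] at h0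
      rw [h0]
      ring
    refine ⟨x, θ e y, ?_, hx, hc⟩
    intro h0
    apply Fm_ne θ y
    ext f
    simp [hc f, h0]
  · -- kills compactly supported: impossible for a bounded nonzero functional
    exfalso
    apply Fm_ne θ y
    ext f
    simp only [Fm_apply, LinearMap.zero_apply]
    have key : ∀ ε : ℝ, 0 < ε → ‖θ f y‖ ≤ C * ε := by
      intro ε hε
      obtain ⟨K, hKc, hK⟩ := exists_compact_norm_lt f hε
      obtain ⟨χ, ⟨V, hVo, hKV, hχ1⟩, hsupp, hcs, hmem⟩ :=
        exists_bump hKc (isOpen_univ : IsOpen (Set.univ : Set X)) (Set.subset_univ K)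
      have habs : ∀ z, |χ z| ≤ 1 := fun z => abs_le.mpr ⟨by linarith [(hmem z).1], (hmem z).2⟩
      have habs' : ∀ z, |1 - χ z| ≤ 1 := fun z =>
        abs_le.mpr ⟨by linarith [(hmem z).2], by linarith [(hmem z).1]⟩
      have hsum : f = cmul (⇑χ) χ.continuous habs f +
          cmul (fun z => 1 - χ z) (by fun_prop) habs' f := by
        ext z
        simp only [ZeroAtInftyContinuousMap.add_apply, cmul_apply]
        push_cast
        ring
      have h2 : Fm θ y (cmul (⇑χ) χ.continuous habs f) = 0 := by
        refine hcpt _ ?_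
        refine IsCompact.of_isClosed_subset hcs isClosed_closure (closure_mono ?_)
        intro z hz
        simp only [Function.mem_support, cmul_apply] at hz ⊢
        intro h0
        simp [h0] at hz
      have h1 : ‖cmul (fun z => 1 - χ z) (by fun_prop) habs' f‖ ≤ ε := by
        refine c0_norm_le _ hε.le fun z => ?_
        by_cases hz : z ∈ V
        · have : χ z = 1 := hχ1 hz
          simp only [cmul_apply, this, sub_self, Complex.ofReal_zero, zero_mul, norm_zero]
          exact hε.le
        · have : ‖f z‖ < ε := hK z fun hzK => hz (hKV hzK)
          simp only [cmul_apply, norm_mul, Complex.norm_real, Real.norm_eq_abs]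
          calc |1 - χ z| * ‖f z‖ ≤ 1 * ε := by
                apply mul_le_mul (habs' z) this.le (norm_nonneg _) zero_le_one
          _ = ε := one_mul ε
      have heq : θ f y = Fm θ y (cmul (fun z => 1 - χ z) (by fun_prop) habs' f) := by
        conv_lhs => rw [hsum]
        simp only [Fm_apply] at h2 ⊢
        rw [map_add]
        simp only [ZeroAtInftyContinuousMap.add_apply]
        rw [show (θ (cmul (⇑χ) χ.continuous habs f)) y = 0 from h2]
        simp
      rw [heq]
      calc ‖Fm θ y (cmul (fun z => 1 - χ z) (by fun_prop) habs' f)‖ ≤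
            C * ‖cmul (fun z => 1 - χ z) (by fun_prop) habs' f‖ := hC _
      _ ≤ C * ε := by nlinarith
    by_contra h0
    have hlt : 0 < ‖θ f y‖ := norm_pos_iff.mpr h0
    have hkey := key (‖θ f y‖ / (C + 1)) (by positivity)
    rw [← mul_div_assoc] at hkey
    have hlt2 : C * ‖θ f y‖ / (C + 1) < ‖θ f y‖ := by
      rw [div_lt_iff₀ (by positivity)]
      nlinarith
    linarith

end Theta
section Theta2

variable {X Y : Type*} [TopologicalSpace X] [LocallyCompactSpace X] [T2Space X]
  [TopologicalSpace Y] [LocallyCompactSpace Y] [T2Space Y]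

/-- Localization of an unboundedness witness near the support point. -/
lemma localizeA {θ : C₀(X, ℂ) ≃ₗ[ℂ] C₀(Y, ℂ)} {y : Y} {x : X} (hx : KillsNear (Fm θ y) x)
    {f : C₀(X, ℂ)} (hfx : f x = 0) (hf1 : θ f y = 1) {U : Set X} (hU : IsOpen U) (hxU : x ∈ U)
    {ε : ℝ} (hε : 0 < ε) :
    ∃ w : C₀(X, ℂ), ‖w‖ ≤ ε ∧ θ w y = 1 ∧ ∀ z, w z ≠ 0 → z ∈ U ∧ f z ≠ 0 ∧ ‖f z‖ < ε := by
  have hNopen : IsOpen (U ∩ {z | ‖f z‖ < ε}) :=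
    hU.inter (isOpen_lt f.continuous.norm continuous_const)
  have hxN : x ∈ U ∩ {z | ‖f z‖ < ε} := ⟨hxU, by simp [hfx, hε]⟩
  obtain ⟨χ, ⟨V, hVo, hxV, hχ1⟩, hsupp, hcs, hmem⟩ :=
    exists_bump (isCompact_singleton : IsCompact {x}) hNopen (Set.singleton_subset_iff.mpr hxN)
  have habs : ∀ z, |χ z| ≤ 1 := fun z => abs_le.mpr ⟨by linarith [(hmem z).1], (hmem z).2⟩
  have habs' : ∀ z, |1 - χ z| ≤ 1 := fun z =>
    abs_le.mpr ⟨by linarith [(hmem z).2], by linarith [(hmem z).1]⟩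
  have hsum : f = cmul (⇑χ) χ.continuous habs f +
      cmul (fun z => 1 - χ z) (by fun_prop) habs' f := by
    ext z
    simp only [ZeroAtInftyContinuousMap.add_apply, cmul_apply]
    push_cast
    ring
  have h2 : Fm θ y (cmul (fun z => 1 - χ z) (by fun_prop) habs' f) = 0 :=
    hx _ ⟨V, hVo, hxV rfl, fun z hz => by simp [hχ1 hz]⟩
  refine ⟨cmul (⇑χ) χ.continuous habs f, ?_, ?_, ?_⟩
  · refine c0_norm_le _ hε.le fun z => ?_
    rcases eq_or_ne (χ z) 0 with h | h
    · simp only [cmul_apply, h, Complex.ofReal_zero, zero_mul, norm_zero]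
      exact hε.le
    · have hz := hsupp (subset_tsupport _ (by simpa using h))
      simp only [cmul_apply, norm_mul, Complex.norm_real, Real.norm_eq_abs]
      calc |χ z| * ‖f z‖ ≤ 1 * ε :=
            mul_le_mul (habs z) hz.2.out.le (norm_nonneg _) zero_le_one
      _ = ε := one_mul ε
  · have := congrArg (fun g => θ g y) hsum
    simp only [map_add, ZeroAtInftyContinuousMap.add_apply] at this
    simp only [Fm_apply] at h2
    rw [h2, add_zero] at this
    rw [← this, hf1]
  · intro z hz
    simp only [cmul_apply, ne_eq, mul_eq_zero, not_or] at hz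
    have hχz : χ z ≠ 0 := by
      intro h
      exact hz.1 (by simp [h])
    have hmem' := hsupp (subset_tsupport _ (by simpa using hχz))
    exact ⟨hmem'.1, hz.2, hmem'.2⟩

/-- An unbounded functional with a support point has a witness vanishing at the point. -/
lemma exists_witnessA {θ : C₀(X, ℂ) ≃ₗ[ℂ] C₀(Y, ℂ)} {y : Y} {x : X}
    (hx : KillsNear (Fm θ y) x) (hb : ¬ Bdd θ y) :
    ∃ f : C₀(X, ℂ), f x = 0 ∧ θ f y = 1 := by
  have h1 : ∃ f : C₀(X, ℂ), f x = 0 ∧ θ f y ≠ 0 := by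
    by_contra h
    push_neg at h
    apply hb
    obtain ⟨e, he1, hes, hecs, heb, V₀, hV₀o, hxV₀, heV₀⟩ :=
      exists_c0_bump (isOpen_univ : IsOpen (Set.univ : Set X)) (Set.mem_univ x)
    refine ⟨‖θ e y‖, fun f => ?_⟩
    have hz : (f - f x • e) x = 0 := by simp [he1]
    have h0 := h _ hz
    simp only [map_sub, map_smul, ZeroAtInftyContinuousMap.sub_apply,
      ZeroAtInftyContinuousMap.smul_apply, smul_eq_mul] at h0
    rw [sub_eq_zero] at h0
    rw [h0, norm_mul]
    calc ‖f x‖ * ‖θ e y‖ ≤ ‖f‖ * ‖θ e y‖ :=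
          mul_le_mul_of_nonneg_right (c0_norm_apply_le f x) (norm_nonneg _)
    _ = ‖θ e y‖ * ‖f‖ := mul_comm _ _
  obtain ⟨f, hfx, hf0⟩ := h1
  refine ⟨(θ f y)⁻¹ • f, by simp [hfx], ?_⟩
  rw [map_smul]
  simp only [ZeroAtInftyContinuousMap.smul_apply, smul_eq_mul]
  exact inv_mul_cancel₀ hf0

/-- Main localization lemma for unbounded functionals. -/
lemma bad_localize {θ : C₀(X, ℂ) ≃ₗ[ℂ] C₀(Y, ℂ)} (hθ : PDP θ) {y : Y} (hb : ¬ Bdd θ y) :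
    ∃ f : C₀(X, ℂ), ∀ ε : ℝ, 0 < ε → ∃ w : C₀(X, ℂ), ‖w‖ ≤ ε ∧ θ w y = 1 ∧
      ∀ z, w z ≠ 0 → f z ≠ 0 ∧ ‖f z‖ < ε := by
  rcases support_dichotomy (sepFm hθ y) (Fm_ne θ y) with ⟨x, hx⟩ | hcpt
  · obtain ⟨f, hfx, hf1⟩ := exists_witnessA hx hb
    refine ⟨f, fun ε hε => ?_⟩
    obtain ⟨w, hw1, hw2, hw3⟩ := localizeA hx hfx hf1 isOpen_univ (Set.mem_univ x) hε
    exact ⟨w, hw1, hw2, fun z hz => (hw3 z hz).2⟩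
  · have h1 : ∃ f₀ : C₀(X, ℂ), θ f₀ y ≠ 0 := by
      by_contra h
      push_neg at h
      exact Fm_ne θ y (by ext f; simpa using h f)
    obtain ⟨f₀, hf0⟩ := h1
    set f := (θ f₀ y)⁻¹ • f₀ with hfdef
    have hf1 : θ f y = 1 := by
      rw [hfdef, map_smul]
      simp only [ZeroAtInftyContinuousMap.smul_apply, smul_eq_mul]
      exact inv_mul_cancel₀ hf0
    refine ⟨f, fun ε hε => ?_⟩
    obtain ⟨K, hKc, hK⟩ := exists_compact_norm_lt f hε
    obtain ⟨χ, ⟨V, hVo, hKV, hχ1⟩, hsupp, hcs, hmem⟩ :=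
      exists_bump hKc (isOpen_univ : IsOpen (Set.univ : Set X)) (Set.subset_univ K)
    have habs : ∀ z, |χ z| ≤ 1 := fun z => abs_le.mpr ⟨by linarith [(hmem z).1], (hmem z).2⟩
    have habs' : ∀ z, |1 - χ z| ≤ 1 := fun z =>
      abs_le.mpr ⟨by linarith [(hmem z).2], by linarith [(hmem z).1]⟩
    have hsum : f = cmul (⇑χ) χ.continuous habs f +
        cmul (fun z => 1 - χ z) (by fun_prop) habs' f := by
      ext z
      simp only [ZeroAtInftyContinuousMap.add_apply, cmul_apply]
      push_cast
      ring
    have h2 : Fm θ y (cmul (⇑χ) χ.continuous habs f) = 0 := by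
      refine hcpt _ ?_
      refine IsCompact.of_isClosed_subset hcs isClosed_closure (closure_mono ?_)
      intro z hz
      simp only [Function.mem_support, cmul_apply] at hz ⊢
      intro h0
      simp [h0] at hz
    refine ⟨cmul (fun z => 1 - χ z) (by fun_prop) habs' f, ?_, ?_, ?_⟩
    · refine c0_norm_le _ hε.le fun z => ?_
      by_cases hz : z ∈ V
      · have : χ z = 1 := hχ1 hz
        simp only [cmul_apply, this, sub_self, Complex.ofReal_zero, zero_mul, norm_zero]
        exact hε.le
      · have : ‖f z‖ < ε := hK z fun hzK => hz (hKV hzK)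
        simp only [cmul_apply, norm_mul, Complex.norm_real, Real.norm_eq_abs]
        calc |1 - χ z| * ‖f z‖ ≤ 1 * ε :=
              mul_le_mul (habs' z) this.le (norm_nonneg _) zero_le_one
        _ = ε := one_mul ε
    · have := congrArg (fun g => θ g y) hsum
      simp only [map_add, ZeroAtInftyContinuousMap.add_apply] at this
      simp only [Fm_apply] at h2
      rw [h2, zero_add] at this
      rw [← this, hf1]
    · intro z hz
      simp only [cmul_apply, ne_eq, mul_eq_zero, not_or] at hz
      have hfz : f z ≠ 0 := hz.2
      have hχz : χ z ≠ 1 := by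
        intro h
        exact hz.1 (by simp [h])
      have hzV : z ∉ V := fun h => hχz (hχ1 h)
      exact ⟨hfz, hK z fun hzK => hzV (hKV hzK)⟩

/-- Mirror transfer: a support point of `Fm θ y` makes `y` a support point of `Fm θ.symm x`. -/
lemma transfer {θ : C₀(X, ℂ) ≃ₗ[ℂ] C₀(Y, ℂ)} (hs : PDP θ.symm) {y : Y} {x : X}
    (hx : KillsNear (Fm θ y) x) : KillsNear (Fm θ.symm x) y := by
  rintro g ⟨N, hNo, hyN, hgN⟩
  obtain ⟨t, ht1, hts, htcs, htb, V, hVo, hyV, htV⟩ := exists_c0_bump hNo hyN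
  have hdisj : ∀ z, t z * g z = 0 := by
    intro z
    by_cases hz : z ∈ N
    · simp [hgN z hz]
    · have : t z = 0 := image_eq_zero_of_notMem_tsupport fun h => hz (hts h)
      simp [this]
  have hprod := hs t g hdisj
  by_contra h0
  have hO : IsOpen {z | θ.symm g z ≠ 0} :=
    (isOpen_compl_singleton (x := (0:ℂ))).preimage (θ.symm g).continuous
  have hzero : Fm θ y (θ.symm t) = 0 := by
    refine hx _ ⟨{z | θ.symm g z ≠ 0}, hO, h0, fun z hz => ?_⟩
    have := hprod z
    rcases mul_eq_zero.mp this with h | h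
    · exact h
    · exact absurd h hz
  rw [Fm_apply, θ.apply_symm_apply, ht1] at hzero
  exact one_ne_zero hzero

/-- No nonempty open set of points whose functionals kill compactly supported functions. -/
lemma no_open_inf {θ : C₀(X, ℂ) ≃ₗ[ℂ] C₀(Y, ℂ)} (hθ : PDP θ) (hs : PDP θ.symm) {O' : Set Y}
    (hO : IsOpen O') (hne : O'.Nonempty) (hall : ∀ μ ∈ O', KillsCpt (Fm θ μ)) : False := by
  obtain ⟨μ₀, hμ₀⟩ := hne
  obtain ⟨e, he1, hes, hecs, heb, V₀, hV₀o, hμV₀, heV₀⟩ := exists_c0_bump hO hμ₀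
  set u := θ.symm e with hu
  have hune : ∃ ω₀, u ω₀ ≠ 0 := by
    by_contra h
    push_neg at h
    have : u = 0 := by ext z; simpa using h z
    have : e = 0 := by
      have := congrArg θ this
      rwa [θ.apply_symm_apply, map_zero] at this
    rw [this] at he1
    simpa using he1
  obtain ⟨ω₀, hω₀⟩ := hune
  rcases support_dichotomy (sepFm hs ω₀) (Fm_ne θ.symm ω₀) with ⟨σ, hσ⟩ | hcpt
  · have hσmem : σ ∈ tsupport ⇑e := by
      by_contra hσe
      have : Fm θ.symm ω₀ e = 0 := by
        refine hσ e ⟨(tsupport ⇑e)ᶜ, isClosed_closure.isOpen_compl, hσe, fun z hz => ?_⟩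
        exact image_eq_zero_of_notMem_tsupport hz
      rw [Fm_apply] at this
      exact hω₀ this
    have hσO : σ ∈ O' := hes hσmem
    have htrans : KillsNear (Fm θ.symm.symm σ) ω₀ := transfer (by rw [LinearEquiv.symm_symm]; exact hθ) hσ
    rw [LinearEquiv.symm_symm] at htrans
    exact Fm_ne θ σ (killsnear_killscpt htrans (hall σ hσO))
  · have : Fm θ.symm ω₀ e = 0 := hcpt e hecs
    rw [Fm_apply] at this
    exact hω₀ this

/-- An isolated point downstairs yields an isolated point upstairs. -/
lemma isolated_transfer {θ : C₀(X, ℂ) ≃ₗ[ℂ] C₀(Y, ℂ)} (hs : PDP θ.symm) {ν : Y}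
    (hν : IsOpen ({ν} : Set Y)) : ∃ x : X, IsOpen ({x} : Set X) := by
  obtain ⟨e, he1, hes, hecs, heb, V₀, hV₀o, hνV₀, heV₀⟩ := exists_c0_bump hν rfl
  set u := θ.symm e with hu
  have hune : ∃ x₀, u x₀ ≠ 0 := by
    by_contra h
    push_neg at h
    have h1 : u = 0 := by ext z; simpa using h z
    have : e = 0 := by
      have := congrArg θ h1
      rwa [θ.apply_symm_apply, map_zero] at this
    rw [this] at he1
    simpa using he1
  obtain ⟨x₀, hx₀⟩ := hune
  have key : ∀ w : C₀(X, ℂ), ∀ z, (w z - θ w ν * u z) * u z = 0 := by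
    intro w z
    set t := θ w - (θ w ν) • e with htdef
    have htν : t ν = 0 := by simp [htdef, he1]
    have hdisj : ∀ ζ, t ζ * e ζ = 0 := by
      intro ζ
      rcases eq_or_ne ζ ν with rfl | hζ
      · simp [htν]
      · have : e ζ = 0 := by
          apply image_eq_zero_of_notMem_tsupport
          intro h
          exact hζ (hes h)
        simp [this]
    have hprod := hs t e hdisj z
    have hst : θ.symm t = w - θ w ν • u := by
      rw [htdef, map_sub, map_smul, θ.symm_apply_apply, hu]
    rw [hst] at hprod
    simpa using hprod
  have huniq : ∀ z, u z ≠ 0 → z = x₀ := by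
    intro z hz
    by_contra hne
    obtain ⟨w, hw1, hws, -, -, -⟩ :=
      exists_c0_bump (isOpen_compl_singleton (x := x₀)) (by simpa using hne)
    have hwx₀ : w x₀ = 0 := by
      apply image_eq_zero_of_notMem_tsupport
      intro h
      exact (hws h) rfl
    have h1 := key w x₀
    rw [hwx₀] at h1
    have hθwv : θ w ν = 0 := by
      rw [zero_sub] at h1
      rcases mul_eq_zero.mp h1 with h | h
      · rcases mul_eq_zero.mp (neg_eq_zero.mp h) with h' | h'
        · exact h'
        · exact absurd h' hx₀
      · exact absurd h hx₀
    have h2 := key w z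
    rw [hw1, hθwv] at h2
    simp only [zero_mul, sub_zero, one_mul] at h2
    exact hz h2
  refine ⟨x₀, ?_⟩
  have : {x₀} = {z | u z ≠ 0} := by
    apply Set.eq_of_subset_of_subset
    · rintro z rfl
      exact hx₀
    · intro z hz
      exact huniq z hz
  rw [this]
  exact (isOpen_compl_singleton (x := (0:ℂ))).preimage u.continuous

end Theta2
section Extract

variable {Z : Type*} [TopologicalSpace Z] [LocallyCompactSpace Z] [T2Space Z]

lemma extract_step {S G : Set Z} (hS : S.Infinite) (hG : IsOpen G) (hSG : S ⊆ G) :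
    ∃ p ∈ S, ∃ V : Set Z, IsOpen V ∧ p ∈ V ∧ V ⊆ G ∧ (S \ closure V).Infinite := by
  obtain ⟨a, ha, b, hb, hab⟩ := hS.nontrivial
  obtain ⟨Wa, Wb, hWao, hWbo, haWa, hbWb, hWd⟩ := t2_separation hab
  obtain ⟨La, hLac, haLa, hLaW⟩ := exists_compact_between (isCompact_singleton : IsCompact {a})
    (hWao.inter hG) (Set.singleton_subset_iff.mpr ⟨haWa, hSG ha⟩)
  obtain ⟨Lb, hLbc, hbLb, hLbW⟩ := exists_compact_between (isCompact_singleton : IsCompact {b})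
    (hWbo.inter hG) (Set.singleton_subset_iff.mpr ⟨hbWb, hSG hb⟩)
  have hcla : closure (interior La) ⊆ Wa ∩ G := by
    calc closure (interior La) ⊆ closure La := closure_mono interior_subset
    _ = La := hLac.isClosed.closure_eq
    _ ⊆ Wa ∩ G := hLaW
  have hclb : closure (interior Lb) ⊆ Wb ∩ G := by
    calc closure (interior Lb) ⊆ closure Lb := closure_mono interior_subset
    _ = Lb := hLbc.isClosed.closure_eq
    _ ⊆ Wb ∩ G := hLbW
  have hcover : S ⊆ (S \ closure (interior La)) ∪ (S \ closure (interior Lb)) := by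
    intro z hz
    by_cases h1 : z ∈ closure (interior La)
    · right
      refine ⟨hz, fun h2 => ?_⟩
      exact Set.disjoint_left.mp hWd (hcla h1).1 (hclb h2).1
    · exact Or.inl ⟨hz, h1⟩
  by_cases hinf : (S \ closure (interior La)).Infinite
  · exact ⟨a, ha, interior La, isOpen_interior, haLa rfl, fun z hz => (hLaW (interior_subset hz)).2,
      hinf⟩
  · rw [Set.not_infinite] at hinf
    have hbinf : (S \ closure (interior Lb)).Infinite := by
      by_contra h
      rw [Set.not_infinite] at h
      exact hS ((hinf.union h).subset hcover)
    exact ⟨b, hb, interior Lb, isOpen_interior, hbLb rfl,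
      fun z hz => (hLbW (interior_subset hz)).2, hbinf⟩

lemma extract {S : Set Z} (hS : S.Infinite) :
    ∃ (p : ℕ → Z) (V : ℕ → Set Z), (∀ n, p n ∈ S ∧ p n ∈ V n ∧ IsOpen (V n)) ∧
      ∀ m n, m ≠ n → Disjoint (V m) (V n) := by
  classical
  let St := {SG : Set Z × Set Z // SG.1.Infinite ∧ IsOpen SG.2 ∧ SG.1 ⊆ SG.2}
  have step : ∀ st : St, ∃ (pV : Z × Set Z), pV.1 ∈ st.1.1 ∧ IsOpen pV.2 ∧ pV.1 ∈ pV.2 ∧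
      pV.2 ⊆ st.1.2 ∧ (st.1.1 \ closure pV.2).Infinite := by
    rintro ⟨⟨S', G'⟩, hS', hG', hSG'⟩
    obtain ⟨p, hp, V, hVo, hpV, hVG, hinf⟩ := extract_step hS' hG' hSG'
    exact ⟨(p, V), hp, hVo, hpV, hVG, hinf⟩
  choose pV h1 h2 h3 h4 h5 using step
  let F : St → St := fun st =>
    ⟨(st.1.1 \ closure (pV st).2, st.1.2 \ closure (pV st).2),
      h5 st, st.2.2.1.sdiff isClosed_closure,
      fun z hz => ⟨st.2.2.2 hz.1, hz.2⟩⟩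
  let st0 : St := ⟨(S, Set.univ), hS, isOpen_univ, Set.subset_univ _⟩
  let traj : ℕ → St := fun n => F^[n] st0
  have htraj_succ : ∀ n, traj (n + 1) = F (traj n) := fun n =>
    Function.iterate_succ_apply' F n st0
  let p : ℕ → Z := fun n => (pV (traj n)).1
  let V : ℕ → Set Z := fun n => (pV (traj n)).2
  have hSmono : ∀ n, (traj (n + 1)).1.1 ⊆ (traj n).1.1 := by
    intro n
    rw [htraj_succ n]
    exact Set.diff_subset
  have hGsub : ∀ n, (traj (n + 1)).1.2 = (traj n).1.2 \ closure (V n) := by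
    intro n
    rw [htraj_succ n]
  have hGmono : ∀ m n, m ≤ n → (traj n).1.2 ⊆ (traj m).1.2 := by
    intro m n hmn
    induction n with
    | zero => simp_all
    | succ k ih =>
      rcases Nat.lt_or_ge m (k+1) with h | h
      · have : (traj (k+1)).1.2 ⊆ (traj k).1.2 := by
          rw [hGsub k]; exact Set.diff_subset
        exact this.trans (ih (Nat.lt_succ_iff.mp h))
      · have : m = k + 1 := le_antisymm hmn h
        rw [this]
  have hSinS : ∀ n, (traj n).1.1 ⊆ S := by
    intro n
    induction n with
    | zero => exact subset_refl S
    | succ k ih => exact (hSmono k).trans ih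
  have hVG : ∀ n, V n ⊆ (traj n).1.2 := fun n => h4 (traj n)
  refine ⟨p, V, fun n => ⟨hSinS n (h1 (traj n)), h3 (traj n), h2 (traj n)⟩, ?_⟩
  have key : ∀ m n, m < n → Disjoint (V m) (V n) := by
    intro m n hmn
    rw [Set.disjoint_right]
    intro z hzn
    have hz2 : z ∈ (traj (m + 1)).1.2 := hGmono (m+1) n hmn (hVG n hzn)
    rw [hGsub m] at hz2
    exact fun hzm => hz2.2 (subset_closure hzm)
  intro m n hmn
  rcases Nat.lt_or_ge m n with h | h
  · exact key m n h
  · exact (key n m (lt_of_le_of_ne h (Ne.symm hmn))).symm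

end Extract
section Hump

variable {X Y : Type*} [TopologicalSpace X] [LocallyCompactSpace X] [T2Space X]
  [TopologicalSpace Y] [LocallyCompactSpace Y] [T2Space Y]

lemma no_infinite_bad {θ : C₀(X, ℂ) ≃ₗ[ℂ] C₀(Y, ℂ)} (μs : ℕ → Y) (xs : ℕ → X)
    (hkill : ∀ n, KillsNear (Fm θ (μs n)) (xs n)) (hbad : ∀ n, ¬ Bdd θ (μs n))
    (hinj : Function.Injective xs) : False := by
  classical
  obtain ⟨p, V, hp, hdisj⟩ := extract (Set.infinite_range_of_injective hinj)
  have hidx : ∀ n, ∃ m, xs m = p n := fun n => (hp n).1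
  choose idx hidxeq using hidx
  -- unboundedness witnesses localized in the disjoint opens
  have hw : ∀ n : ℕ, ∃ w : C₀(X, ℂ), ‖w‖ ≤ (1/2 : ℝ)^n ∧ θ w (μs (idx n)) = (n + 1 : ℂ) ∧
      ∀ z, w z ≠ 0 → z ∈ V n := by
    intro n
    have hkn : KillsNear (Fm θ (μs (idx n))) (p n) := by
      rw [← hidxeq n]; exact hkill (idx n)
    obtain ⟨f, hfx, hf1⟩ := exists_witnessA hkn (hbad (idx n))
    have hεpos : (0:ℝ) < (1/2 : ℝ)^n / (n + 1) := by positivity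
    obtain ⟨w, hw1, hw2, hw3⟩ := localizeA hkn hfx hf1 (hp n).2.2 (hp n).2.1 hεpos
    refine ⟨((n:ℂ) + 1) • w, ?_, ?_, ?_⟩
    · rw [norm_smul ((n:ℂ)+1) w]
      have h1 : ‖((n:ℂ) + 1)‖ = (n + 1 : ℝ) := by
        rw [show ((n:ℂ) + 1) = ((n + 1 : ℝ) : ℂ) by push_cast; ring, Complex.norm_real,
          Real.norm_eq_abs, abs_of_pos (by positivity)]
      rw [h1]
      calc (n + 1 : ℝ) * ‖w‖ ≤ (n + 1 : ℝ) * ((1/2 : ℝ)^n / (n + 1)) :=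
            mul_le_mul_of_nonneg_left hw1 (by positivity)
      _ = (1/2 : ℝ)^n := by field_simp
    · rw [map_smul]
      simp only [ZeroAtInftyContinuousMap.smul_apply, smul_eq_mul, hw2, mul_one]
    · intro z hz
      have : w z ≠ 0 := by
        intro h0
        apply hz
        simp [h0]
      exact (hw3 z this).1
  choose w hwn hwv hwV using hw
  have hsum : Summable w := by
    refine Summable.of_norm_bounded (summable_geometric_of_lt_one (by norm_num) (by norm_num)) hwn
  set h := ∑' n, w n with hh
  have heval : ∀ z, h z = ∑' n, w n z := by
    intro z
    have := (evCLM z).map_tsum hsum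
    simpa using this
  have hVeval : ∀ n, ∀ z ∈ V n, h z = w n z := by
    intro n z hz
    rw [heval z]
    refine tsum_eq_single n fun m hm => ?_
    by_contra h0
    exact Set.disjoint_left.mp (hdisj m n hm) (hwV m z h0) hz
  have hlarge : ∀ n, ‖θ h (μs (idx n))‖ = (n + 1 : ℝ) := by
    intro n
    have hkn : KillsNear (Fm θ (μs (idx n))) (p n) := by
      rw [← hidxeq n]; exact hkill (idx n)
    have hzero : Fm θ (μs (idx n)) (h - w n) = 0 := by
      refine hkn _ ⟨V n, (hp n).2.2, (hp n).2.1, fun z hz => ?_⟩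
      simp [ZeroAtInftyContinuousMap.sub_apply, hVeval n z hz]
    have : Fm θ (μs (idx n)) h = Fm θ (μs (idx n)) (w n) := by
      have := map_sub (Fm θ (μs (idx n))) h (w n)
      rw [hzero] at this
      linear_combination -this
    rw [Fm_apply, Fm_apply] at this
    rw [this, hwv n]
    rw [show ((n:ℂ) + 1) = ((n + 1 : ℝ) : ℂ) by push_cast; ring, Complex.norm_real,
      Real.norm_eq_abs, abs_of_pos (by positivity)]
  obtain ⟨n, hn⟩ := exists_nat_gt ‖θ h‖
  have := c0_norm_apply_le (θ h) (μs (idx n))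
  rw [hlarge n] at this
  have : (n : ℝ) < n + 1 := by linarith
  linarith [c0_norm_apply_le (θ h) (μs (idx n)), hlarge n, hn]

end Hump
section MainLemma

lemma open_infinite {Y : Type*} [TopologicalSpace Y] [T1Space Y]
    (hY : ∀ y : Y, (𝓝[≠] y).NeBot) {U : Set Y} (hU : IsOpen U) (hne : U.Nonempty) :
    U.Infinite := by
  intro hfin
  obtain ⟨u, hu⟩ := hne
  have hcl : IsClosed (U \ {u}) := (hfin.subset Set.diff_subset).isClosed
  have hopen : IsOpen ({u} : Set Y) := by
    have heq : ({u} : Set Y) = U ∩ (U \ {u})ᶜ := by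
      ext z
      constructor
      · rintro rfl
        exact ⟨hu, fun h => h.2 rfl⟩
      · rintro ⟨hzU, hz2⟩
        by_contra hz
        exact hz2 ⟨hzU, fun h => hz h⟩
    rw [heq]
    exact hU.inter hcl.isOpen_compl
  have h1 : ({u} : Set Y) ∈ 𝓝 u := hopen.mem_nhds rfl
  have h2 : ({u}ᶜ ∩ {u} : Set Y) ∈ 𝓝[≠] u := inter_mem_nhdsWithin _ h1
  rw [Set.compl_inter_self] at h2
  exact (hY u).ne (Filter.empty_mem_iff_bot.mp h2)

variable {X Y : Type*} [TopologicalSpace X] [LocallyCompactSpace X] [T2Space X]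
  [TopologicalSpace Y] [LocallyCompactSpace Y] [T2Space Y]

/-- Main lemma: if the target space has no isolated points, every evaluation functional
is bounded. -/
lemma main_bounded {θ : C₀(X, ℂ) ≃ₗ[ℂ] C₀(Y, ℂ)} (hθ : PDP θ) (hs : PDP θ.symm)
    (hY : ∀ y : Y, (𝓝[≠] y).NeBot) (ν : Y) : Bdd θ ν := by
  classical
  by_contra hb
  obtain ⟨f, hloc⟩ := bad_localize hθ hb
  have hwk : ∀ k : ℕ, ∃ w : C₀(X, ℂ), ‖w‖ ≤ (1/4 : ℝ)^k ∧ θ w ν = 1 ∧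
      ∀ z, w z ≠ 0 → f z ≠ 0 ∧ ‖f z‖ < (1/4 : ℝ)^k := fun k => hloc _ (by positivity)
  choose wk hwk1 hwk2 hwk3 using hwk
  -- the open sets `O k`
  set O : ℕ → Set Y := fun k => {μ | 1/2 < ‖θ (wk k) μ‖} with hO
  have hOopen : ∀ k, IsOpen (O k) :=
    fun k => isOpen_lt continuous_const (θ (wk k)).continuous.norm
  have hνO : ∀ k, ν ∈ O k := by
    intro k
    simp only [hO, Set.mem_setOf_eq, hwk2 k]
    norm_num
  -- each `O k` contains a good point different from `ν`
  have hgood : ∀ k, ∃ μ, μ ∈ O k ∧ μ ≠ ν ∧ Bdd θ μ := by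
    intro k
    by_contra hno
    push_neg at hno
    set A : Set Y := {μ | μ ∈ O k ∧ μ ≠ ν ∧ ∃ x, KillsNear (Fm θ μ) x} with hA
    by_cases hAinf : A.Infinite
    · obtain g := hAinf.natEmbedding
      set μs : ℕ → Y := fun n => (g n).1 with hμs
      have hx : ∀ n, ∃ x, KillsNear (Fm θ (μs n)) x := fun n => (g n).2.2.2
      choose xs hxs using hx
      have hμinj : Function.Injective μs := by
        intro m n h
        exact g.injective (Subtype.ext h)
      have hxinj : Function.Injective xs := by
        intro m n h
        by_contra hmn
        have h1 : KillsNear (Fm θ.symm (xs m)) (μs m) := transfer hs (hxs m)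
        have h2 : KillsNear (Fm θ.symm (xs m)) (μs n) := by
          rw [h]; exact transfer hs (hxs n)
        exact hmn (hμinj (killsnear_unique h1 h2 (Fm_ne θ.symm (xs m))))
      exact no_infinite_bad μs xs hxs (fun n => hno (μs n) (g n).2.1 (g n).2.2.1) hxinj
    · rw [Set.not_infinite] at hAinf
      set O'' : Set Y := (O k ∩ {ν}ᶜ) \ A with hO''
      have hO''open : IsOpen O'' :=
        ((hOopen k).inter isClosed_singleton.isOpen_compl).sdiff hAinf.isClosed
      have hO''ne : O''.Nonempty := by
        have h1 : (O k ∩ {ν}ᶜ : Set Y).Nonempty := by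
          have h2 : ({ν}ᶜ ∩ O k : Set Y) ∈ 𝓝[≠] ν :=
            inter_mem_nhdsWithin _ ((hOopen k).mem_nhds (hνO k))
          obtain ⟨z, hz1, hz2⟩ := (hY ν).nonempty_of_mem h2
          exact ⟨z, hz2, hz1⟩
        exact (open_infinite hY ((hOopen k).inter isClosed_singleton.isOpen_compl) h1).diff
          hAinf |>.nonempty
      refine no_open_inf hθ hs hO''open hO''ne fun μ hμ => ?_
      have hμbad : ¬ Bdd θ μ := hno μ hμ.1.1 hμ.1.2
      rcases support_dichotomy (sepFm hθ μ) (Fm_ne θ μ) with ⟨x, hx⟩ | hcpt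
      · exact absurd ⟨hμ.1.1, hμ.1.2, x, hx⟩ hμ.2
      · exact hcpt
  choose μk hμk1 hμk2 hμk3 using hgood
  -- the weighted-evaluation form at the good points
  have hform : ∀ k, ∃ (x : X) (c : ℂ), c ≠ 0 ∧ (∀ f' : C₀(X, ℂ), θ f' (μk k) = c * f' x) ∧
      f x ≠ 0 ∧ ‖f x‖ < (1/4 : ℝ)^k ∧ (1/2 : ℝ) * 4^k < ‖c‖ := by
    intro k
    obtain ⟨x, c, hc0, hkill, heval⟩ := good_form hθ (hμk3 k)
    have hO' := hμk1 k
    simp only [hO, Set.mem_setOf_eq] at hO'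
    rw [heval (wk k), norm_mul] at hO'
    have hwx : wk k x ≠ 0 := by
      intro h0
      rw [h0] at hO'
      simp at hO'
      linarith
    obtain ⟨hfx, hfxlt⟩ := hwk3 k x hwx
    have hwb : ‖wk k x‖ ≤ (1/4 : ℝ)^k := (c0_norm_apply_le (wk k) x).trans (hwk1 k)
    have hcb : (1/2 : ℝ) * 4^k < ‖c‖ := by
      have h1 : (1/2 : ℝ) < ‖c‖ * (1/4)^k :=
        lt_of_lt_of_le hO' (mul_le_mul_of_nonneg_left hwb (norm_nonneg c))
      have h2 := mul_lt_mul_of_pos_right h1 (pow_pos (by norm_num : (0:ℝ) < 4) k)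
      calc (1/2 : ℝ) * 4^k < ‖c‖ * (1/4)^k * 4^k := h2
      _ = ‖c‖ := by
        rw [mul_assoc, ← mul_pow]
        norm_num
    exact ⟨x, c, hc0, heval, hfx, hfxlt, hcb⟩
  choose x c hc0 heval hfx hfxlt hcb using hform
  -- choose a subsequence along which `‖f (x k)‖` is strictly decreasing
  have hnext : ∀ k : ℕ, ∃ k', k < k' ∧ (1/4 : ℝ)^k' < ‖f (x k)‖ := by
    intro k
    have hpos : 0 < ‖f (x k)‖ := norm_pos_iff.mpr (hfx k)
    obtain ⟨n, hn⟩ := exists_pow_lt_of_lt_one hpos (by norm_num : (1/4 : ℝ) < 1)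
    refine ⟨max n (k+1), lt_of_lt_of_le (Nat.lt_succ_self k) (le_max_right _ _), ?_⟩
    calc (1/4 : ℝ)^(max n (k+1)) ≤ (1/4 : ℝ)^n :=
          pow_le_pow_of_le_one (by norm_num) (by norm_num) (le_max_left _ _)
    _ < ‖f (x k)‖ := hn
  choose nxt hnxt1 hnxt2 using hnext
  set K : ℕ → ℕ := fun j => nxt^[j] 0 with hK
  have hKsucc : ∀ j, K (j+1) = nxt (K j) := fun j => Function.iterate_succ_apply' nxt j 0
  have hKmono : StrictMono K := strictMono_nat_of_lt_succ fun j => by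
    rw [hKsucc j]; exact hnxt1 (K j)
  set t : ℕ → ℝ := fun j => ‖f (x (K j))‖ with ht
  have htpos : ∀ j, 0 < t j := fun j => norm_pos_iff.mpr (hfx (K j))
  have htdec : ∀ j, t (j+1) < t j := by
    intro j
    calc t (j+1) < (1/4 : ℝ)^(K (j+1)) := hfxlt (K (j+1))
    _ < t j := by rw [hKsucc j]; exact hnxt2 (K j)
  set m : ℕ → ℝ := fun j => (t (j+1) + t j) / 2 with hm
  have hm1 : ∀ j, t (j+1) < m j := fun j => by
    simp only [hm]; linarith [htdec j]
  have hm2 : ∀ j, m j < t j := fun j => by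
    simp only [hm]; linarith [htdec j]
  have hmdec : ∀ i j, i < j → m j < m i := by
    intro i j hij
    have key : ∀ j, m (j+1) < m j := fun j => by
      simp only [hm]; linarith [htdec j, htdec (j+1)]
    clear_value m
    clear hm hm1 hm2
    induction j with
    | zero => omega
    | succ n ih =>
      rcases Nat.lt_or_ge i n with h | h
      · exact (key n).trans (ih h)
      · have : i = n := by omega
        rw [this]; exact key n
  set M : ℕ → ℝ := fun j => Nat.rec (t 0 + 1) (fun i _ => m i) j with hM
  have hM0 : M 0 = t 0 + 1 := rfl
  have hMsucc : ∀ j, M (j+1) = m j := fun j => rfl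
  have htM : ∀ j, t j < M j := by
    intro j
    cases j with
    | zero => rw [hM0]; linarith
    | succ n => rw [hMsucc]; exact hm1 n
  -- disjoint annuli
  set W : ℕ → Set X := fun j => {z | m j < ‖f z‖ ∧ ‖f z‖ < M j} with hW
  have hWopen : ∀ j, IsOpen (W j) :=
    fun j => (isOpen_lt continuous_const f.continuous.norm).inter
      (isOpen_lt f.continuous.norm continuous_const)
  have hxW : ∀ j, x (K j) ∈ W j := fun j => ⟨hm2 j, htM j⟩
  have hWdisj : ∀ i j, i ≠ j → Disjoint (W i) (W j) := by
    have key : ∀ i j, i < j → Disjoint (W i) (W j) := by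
      intro i j hij
      rw [Set.disjoint_left]
      rintro z ⟨hz1, hz2⟩ ⟨hz3, hz4⟩
      have hMj : M j ≤ m i := by
        cases j with
        | zero => omega
        | succ n =>
          rw [hMsucc]
          rcases Nat.lt_or_ge i n with h | h
          · exact (hmdec i n h).le
          · have : i = n := by omega
            rw [this]
      linarith
    intro i j hij
    rcases Nat.lt_or_ge i j with h | h
    · exact key i j h
    · exact (key j i (lt_of_le_of_ne h (Ne.symm hij))).symm
  -- bumps
  have hbump : ∀ j, ∃ e : C₀(X, ℂ), e (x (K j)) = 1 ∧ tsupport ⇑e ⊆ W j ∧ ∀ z, ‖e z‖ ≤ 1 := by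
    intro j
    obtain ⟨e, he1, hes, -, heb, -⟩ := exists_c0_bump (hWopen j) (hxW j)
    exact ⟨e, he1, hes, heb⟩
  choose e he1 hes heb using hbump
  have hsummable : Summable (fun j => ((1/2 : ℂ)^j) • e j) := by
    refine Summable.of_norm_bounded
      (summable_geometric_of_lt_one (by norm_num) (by norm_num : (1/2:ℝ) < 1)) fun j => ?_
    rw [norm_smul ((1/2 : ℂ)^j) (e j)]
    have h1 : ‖(1/2 : ℂ)^j‖ = (1/2 : ℝ)^j := by
      rw [norm_pow]
      norm_num
    rw [h1]
    calc (1/2:ℝ)^j * ‖e j‖ ≤ (1/2:ℝ)^j * 1 := by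
          refine mul_le_mul_of_nonneg_left ?_ (by positivity)
          exact c0_norm_le _ zero_le_one (heb j)
    _ = (1/2:ℝ)^j := mul_one _
  set g : C₀(X, ℂ) := ∑' j, ((1/2 : ℂ)^j) • e j with hg
  have hgeval : ∀ z, g z = ∑' j, ((1/2 : ℂ)^j) * e j z := by
    intro z
    rw [hg]
    have := (evCLM z).map_tsum hsummable
    simpa using this
  have hgx : ∀ j, g (x (K j)) = (1/2 : ℂ)^j := by
    intro j
    rw [hgeval]
    rw [tsum_eq_single j]
    · rw [he1 j, mul_one]
    · intro i hi
      have : e i (x (K j)) = 0 := by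
        apply image_eq_zero_of_notMem_tsupport
        intro hmem
        exact Set.disjoint_left.mp (hWdisj i j hi) (hes i hmem) (hxW j)
      rw [this, mul_zero]
  -- final contradiction
  have hlarge : ∀ j, (1/2 : ℝ) * 2^j ≤ ‖θ g (μk (K j))‖ := by
    intro j
    rw [heval (K j) g, norm_mul, hgx j]
    have h1 : ‖(1/2 : ℂ)^j‖ = (1/2 : ℝ)^j := by rw [norm_pow]; norm_num
    rw [h1]
    have h2 : (1/2 : ℝ) * 4^(K j) ≤ ‖c (K j)‖ := (hcb (K j)).le
    have h3 : (4 : ℝ)^j ≤ 4^(K j) :=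
      pow_le_pow_right₀ (by norm_num) (hKmono.le_apply)
    calc (1/2 : ℝ) * 2^j = ((1/2 : ℝ) * 4^j) * (1/2:ℝ)^j := by
          rw [mul_assoc, ← mul_pow]
          norm_num
    _ ≤ ((1/2 : ℝ) * 4^(K j)) * (1/2:ℝ)^j := by
          have : (1/2 : ℝ) * 4^j ≤ (1/2 : ℝ) * 4^(K j) := by linarith
          exact mul_le_mul_of_nonneg_right this (by positivity)
    _ ≤ ‖c (K j)‖ * (1/2:ℝ)^j := mul_le_mul_of_nonneg_right h2 (by positivity)
  obtain ⟨n, hn⟩ := exists_nat_gt (2 * ‖θ g‖)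
  have h2n : (n : ℝ) ≤ 2^n := by
    calc (n : ℝ) ≤ ((2^n : ℕ) : ℝ) := by
          exact_mod_cast (Nat.lt_two_pow_self (n := n)).le
    _ = 2^n := by push_cast; ring
  have := (hlarge n).trans (c0_norm_apply_le (θ g) (μk (K n)))
  nlinarith [norm_nonneg (θ g)]

end MainLemma
end

theorem stmt_11
    {Ω Δ : Type*} [TopologicalSpace Ω] [LocallyCompactSpace Ω] [T2Space Ω]
    [TopologicalSpace Δ] [LocallyCompactSpace Δ] [T2Space Δ]
    (hni : (∀ ω : Ω, (𝓝[≠] ω).NeBot) ∨ (∀ ν : Δ, (𝓝[≠] ν).NeBot))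
    (θ : C₀(Ω, ℂ) ≃ₗ[ℂ] C₀(Δ, ℂ))
    (hfwd : ∀ f g : C₀(Ω, ℂ), f * g = 0 → θ f * θ g = 0)
    (hinv : ∀ f g : C₀(Δ, ℂ), f * g = 0 → θ.symm f * θ.symm g = 0) :
    ∃ C : ℝ, ∀ f : C₀(Ω, ℂ), ‖θ f‖ ≤ C * ‖f‖ := by
  classical
  have hθ : PDP θ := by
    intro f g h y
    have hfg : f * g = 0 := by
      ext x
      simp [ZeroAtInftyContinuousMap.mul_apply, h x]
    have := hfwd f g hfg
    calc θ f y * θ g y = (θ f * θ g) y := by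
          simp [ZeroAtInftyContinuousMap.mul_apply]
    _ = 0 := by rw [this]; rfl
  have hsym : PDP θ.symm := by
    intro f g h x
    have hfg : f * g = 0 := by
      ext z
      simp [ZeroAtInftyContinuousMap.mul_apply, h z]
    have := hinv f g hfg
    calc θ.symm f x * θ.symm g x = (θ.symm f * θ.symm g) x := by
          simp [ZeroAtInftyContinuousMap.mul_apply]
    _ = 0 := by rw [this]; rfl
  -- in both branches, `Δ` has no isolated points
  have hΔ : ∀ ν : Δ, (𝓝[≠] ν).NeBot := by
    rcases hni with hΩ | hΔ
    · intro ν
      by_contra h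
      rw [Filter.not_neBot, ← isOpen_singleton_iff_punctured_nhds] at h
      obtain ⟨x, hx⟩ := isolated_transfer hsym h
      rw [isOpen_singleton_iff_punctured_nhds] at hx
      exact (hΩ x).ne hx
    · exact hΔ
  have hbdd : ∀ ν : Δ, Bdd θ ν := main_bounded hθ hsym hΔ
  choose Cν hCν using hbdd
  -- Banach–Steinhaus
  set G : Δ → (C₀(Ω, ℂ) →L[ℂ] ℂ) := fun ν =>
    LinearMap.mkContinuous (Fm θ ν) (Cν ν) (fun f => by simpa using hCν ν f) with hG
  have hpt : ∀ f : C₀(Ω, ℂ), ∃ C, ∀ ν, ‖G ν f‖ ≤ C := by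
    intro f
    refine ⟨‖θ f‖, fun ν => ?_⟩
    have : G ν f = θ f ν := rfl
    rw [this]
    exact c0_norm_apply_le (θ f) ν
  obtain ⟨C', hC'⟩ := banach_steinhaus hpt
  refine ⟨max C' 0, fun f => ?_⟩
  refine c0_norm_le _ (mul_nonneg (le_max_right _ _) (norm_nonneg f)) fun ν => ?_
  have h1 : θ f ν = G ν f := rfl
  rw [h1]
  calc ‖G ν f‖ ≤ ‖G ν‖ * ‖f‖ := (G ν).le_opNorm f
  _ ≤ C' * ‖f‖ := mul_le_mul_of_nonneg_right (hC' ν) (norm_nonneg f)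
  _ ≤ max C' 0 * ‖f‖ := mul_le_mul_of_nonneg_right (le_max_left _ _) (norm_nonneg f)
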